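/- Let p be an odd prime and d ∈ F_p with d ≠ 0 and d ≠ 1. Then, as elements of F_p, M_d ≡ (−1)^{(p+1)/2} · Σ_{j=0}^{(p−1)/2} binom((p−1)/2, j)² · d^j − χ(d) (mod p). -/

import Mathlib

open Finset

/-- The number of points `(x, y)` over `ZMod p` with `y² = (x² - 1)(d x² - 1)`. -/
noncomputable def mCard (p : ℕ) (d : ZMod p) : ℕ :=
  Nat.card {xy : ZMod p × ZMod p //
    xy.2 ^ 2 = (xy.1 ^ 2 - 1) * (d * xy.1 ^ 2 - 1)}


lemma sum_pow_zmod (p : ℕ) [Fact p.Prime] (k : ℕ) :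
    (∑ x : ZMod p, x ^ k) = if (p - 1) ∣ k ∧ k ≠ 0 then -1 else 0 := by
  classical
  rcases eq_or_ne k 0 with rfl | hk
  · simp [ZMod.natCast_self, Finset.card_univ, ZMod.card]
  · have h1 : (∑ x : ZMod p, x ^ k) = ∑ x : (ZMod p)ˣ, (x : ZMod p) ^ k := by
      let φ : (ZMod p)ˣ ↪ ZMod p := ⟨fun x ↦ x, Units.val_injective⟩
      have huniv : (univ : Finset (ZMod p)ˣ).map φ = univ \ {0} := by
        ext x
        simp only [mem_map, mem_univ, Function.Embedding.coeFn_mk, true_and, mem_sdiff,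
          mem_singleton, φ]
        exact isUnit_iff_ne_zero
      calc
        ∑ x : ZMod p, x ^ k = ∑ x ∈ univ \ {(0 : ZMod p)}, x ^ k := by
          rw [← sum_sdiff ({0} : Finset (ZMod p)).subset_univ, sum_singleton, zero_pow hk,
            add_zero]
        _ = ∑ x : (ZMod p)ˣ, (x : ZMod p) ^ k := by simp [φ, ← huniv, univ.sum_map φ]
    rw [h1, FiniteField.sum_pow_units, ZMod.card]
    simp [hk]

lemma expand_sum (p : ℕ) [Fact p.Prime] (hp : p ≠ 2) (d : ZMod p) :
    ∑ x : ZMod p, ((x ^ 2 - 1) * (d * x ^ 2 - 1)) ^ (p / 2) =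
      (-1 : ZMod p) ^ (p / 2 + 1) *
        (∑ j ∈ range (p / 2 + 1), ((p / 2).choose j : ZMod p) ^ 2 * d ^ j)
      - d ^ (p / 2) := by
  classical
  set m := p / 2 with hm
  have hp3 : 3 ≤ p := by
    have h2 := (Fact.out : p.Prime).two_le
    rcases Nat.lt_or_ge p 3 with h | h
    · interval_cases p <;> simp_all
    · exact h
  have hpm : p = 2 * m + 1 := by
    obtain ⟨t, ht⟩ := (Fact.out : p.Prime).odd_of_ne_two hp
    omega
  have hm1 : 1 ≤ m := by omega
  set A : ℕ → ZMod p := fun i => ((-1 : ZMod p)) ^ (m - i) * ((m.choose i : ℕ) : ZMod p)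
    with hA
  set B : ℕ → ZMod p := fun j => d ^ j * ((-1 : ZMod p)) ^ (m - j) * ((m.choose j : ℕ) : ZMod p)
    with hB
  have hexp : ∀ x : ZMod p, ((x ^ 2 - 1) * (d * x ^ 2 - 1)) ^ m =
      ∑ i ∈ range (m + 1), ∑ j ∈ range (m + 1), A i * B j * x ^ (2 * (i + j)) := by
    intro x
    have h1 : (x ^ 2 - 1) ^ m = ∑ i ∈ range (m + 1), A i * x ^ (2 * i) := by
      have h := add_pow (x ^ 2) (-1 : ZMod p) m
      rw [show x ^ 2 + (-1) = x ^ 2 - 1 by ring] at h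
      rw [h]
      refine Finset.sum_congr rfl fun i _ => ?_
      rw [show (x ^ 2) ^ i = x ^ (2 * i) by rw [← pow_mul, mul_comm], hA]
      ring
    have h2 : (d * x ^ 2 - 1) ^ m = ∑ j ∈ range (m + 1), B j * x ^ (2 * j) := by
      have h := add_pow (d * x ^ 2) (-1 : ZMod p) m
      rw [show d * x ^ 2 + (-1) = d * x ^ 2 - 1 by ring] at h
      rw [h]
      refine Finset.sum_congr rfl fun j _ => ?_
      rw [mul_pow, show (x ^ 2) ^ j = x ^ (2 * j) by rw [← pow_mul, mul_comm], hB]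
      ring
    rw [mul_pow, h1, h2, Finset.sum_mul_sum]
    refine Finset.sum_congr rfl fun i _ => Finset.sum_congr rfl fun j _ => ?_
    rw [show 2 * (i + j) = 2 * i + 2 * j by ring, pow_add]
    ring
  rw [Finset.sum_congr rfl fun x (_ : x ∈ univ) => hexp x]
  rw [Finset.sum_comm]
  have hswap : ∀ i, ∑ x : ZMod p, ∑ j ∈ range (m + 1), A i * B j * x ^ (2 * (i + j))
      = ∑ j ∈ range (m + 1), A i * B j * (∑ x : ZMod p, x ^ (2 * (i + j))) := by
    intro i
    rw [Finset.sum_comm]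
    exact Finset.sum_congr rfl fun j _ => by rw [Finset.mul_sum]
  rw [Finset.sum_congr rfl fun i (_ : i ∈ range (m+1)) => hswap i]
  -- evaluate the power sums
  have hS : ∀ i ∈ range (m + 1), ∀ j ∈ range (m + 1),
      (∑ x : ZMod p, x ^ (2 * (i + j)))
        = (if j = m - i then -1 else 0) + (if i = m ∧ j = m then -1 else 0) := by
    intro i hi j hj
    simp only [mem_range] at hi hj
    rw [sum_pow_zmod]
    by_cases hmm : i = m ∧ j = m
    · rw [if_pos ⟨⟨2, by omega⟩, by omega⟩, if_neg (by omega), if_pos hmm]; ring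
    · by_cases hij : i + j = m
      · rw [if_pos ⟨⟨1, by omega⟩, by omega⟩, if_pos (by omega), if_neg hmm]; ring
      · rw [if_neg ?_, if_neg (by omega), if_neg hmm]
        · ring
        rintro ⟨⟨c, hc⟩, hne⟩
        rw [show p - 1 = 2 * m by omega, mul_assoc] at hc
        have hc' : i + j = m * c := Nat.eq_of_mul_eq_mul_left (by norm_num) hc
        have hc2 : c ≤ 2 := by
          by_contra hcc
          have : m * 3 ≤ m * c := Nat.mul_le_mul_left m (by omega)
          omega
        interval_cases c <;> omega
  have hrw : ∀ i ∈ range (m + 1), ∀ j ∈ range (m + 1),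
      A i * B j * (∑ x : ZMod p, x ^ (2 * (i + j)))
        = (if j = m - i then -(A i * B j) else 0)
          + (if i = m ∧ j = m then -(A i * B j) else 0) := by
    intro i hi j hj
    rw [hS i hi j hj]
    split_ifs <;> ring
  rw [Finset.sum_congr rfl fun i hi => Finset.sum_congr rfl fun j hj => hrw i hi j hj]
  rw [Finset.sum_congr rfl fun i (hi : i ∈ range (m+1)) => Finset.sum_add_distrib,
    Finset.sum_add_distrib]
  have e1 : ∑ i ∈ range (m + 1), ∑ j ∈ range (m + 1),
      (if j = m - i then -(A i * B j) else 0) = ∑ i ∈ range (m + 1), -(A i * B (m - i)) := by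
    refine Finset.sum_congr rfl fun i hi => ?_
    rw [Finset.sum_ite_eq' (range (m + 1)) (m - i) (fun j => -(A i * B j)),
      if_pos (by simp only [mem_range] at hi ⊢; omega)]
  have e2 : ∑ i ∈ range (m + 1), ∑ j ∈ range (m + 1),
      (if i = m ∧ j = m then -(A i * B j) else 0) = -(A m * B m) := by
    rw [Finset.sum_eq_single m]
    · rw [Finset.sum_eq_single m]
      · simp
      · intro j _ hj; simp [hj]
      · intro h; exact absurd (self_mem_range_succ m) h
    · intro i _ hi; exact Finset.sum_eq_zero fun j _ => by simp [hi]
    · intro h; exact absurd (self_mem_range_succ m) h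
  rw [e1, e2]
  have hAB : ∀ i ∈ range (m + 1),
      A i * B (m - i) = (-1 : ZMod p) ^ m * ((m.choose i : ℕ) : ZMod p) ^ 2 * d ^ (m - i) := by
    intro i hi
    simp only [mem_range] at hi
    have hi' : i ≤ m := by omega
    have h1 : ((-1 : ZMod p)) ^ (m - i) * (-1) ^ i = (-1) ^ m := by
      rw [← pow_add, Nat.sub_add_cancel hi']
    rw [show A i * B (m - i)
        = (((-1 : ZMod p)) ^ (m - i) * (-1) ^ i) * ((m.choose i : ℕ) : ZMod p) ^ 2 * d ^ (m - i)
        from by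
      simp only [hA, hB, Nat.sub_sub_self hi', Nat.choose_symm hi']
      ring]
    rw [h1]
  have hrefl : ∑ i ∈ range (m + 1), ((m.choose i : ℕ) : ZMod p) ^ 2 * d ^ (m - i)
      = ∑ j ∈ range (m + 1), ((m.choose j : ℕ) : ZMod p) ^ 2 * d ^ j := by
    rw [← Finset.sum_range_reflect (fun j => ((m.choose j : ℕ) : ZMod p) ^ 2 * d ^ j) (m + 1)]
    refine Finset.sum_congr rfl fun j hj => ?_
    simp only [mem_range] at hj
    have hj' : j ≤ m := by omega
    rw [show m + 1 - 1 - j = m - j from by omega, Nat.choose_symm hj']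
  have hABm : A m * B m = d ^ m := by
    simp [hA, hB]
  have key : ∑ i ∈ range (m + 1), -(A i * B (m - i))
      = (-1 : ZMod p) ^ (m + 1) * ∑ j ∈ range (m + 1), ((m.choose j : ℕ) : ZMod p) ^ 2 * d ^ j := by
    calc ∑ i ∈ range (m + 1), -(A i * B (m - i))
        = ∑ i ∈ range (m + 1),
            (-1 : ZMod p) ^ (m + 1) * (((m.choose i : ℕ) : ZMod p) ^ 2 * d ^ (m - i)) := by
          refine Finset.sum_congr rfl fun i hi => ?_
          rw [hAB i hi, pow_succ]; ring
      _ = (-1 : ZMod p) ^ (m + 1)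
            * ∑ i ∈ range (m + 1), ((m.choose i : ℕ) : ZMod p) ^ 2 * d ^ (m - i) := by
          rw [Finset.mul_sum]
      _ = _ := by rw [hrefl]
  rw [key, hABm]
  ring

lemma mCard_cast (p : ℕ) [Fact p.Prime] (hp : p ≠ 2) (d : ZMod p) :
    (mCard p d : ZMod p) =
      ∑ x : ZMod p, ((x ^ 2 - 1) * (d * x ^ 2 - 1)) ^ (p / 2) := by
  classical
  have hchar : ringChar (ZMod p) ≠ 2 := (ZMod.ringChar_zmod_n p).substr hp
  have h1 : mCard p d =
      ∑ x : ZMod p, Fintype.card {y : ZMod p // y ^ 2 = (x ^ 2 - 1) * (d * x ^ 2 - 1)} := by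
    rw [mCard, Nat.card_eq_fintype_card]
    rw [Fintype.card_congr (Equiv.subtypeProdEquivSigmaSubtype
      (fun (x y : ZMod p) => y ^ 2 = (x ^ 2 - 1) * (d * x ^ 2 - 1)))]
    rw [Fintype.card_sigma]
  have h2 : ∀ a : ZMod p, ((Fintype.card {y : ZMod p // y ^ 2 = a} : ℕ) : ZMod p)
      = a ^ (p / 2) + 1 := by
    intro a
    have e := quadraticChar_card_sqrts hchar a
    rw [Set.toFinset_card] at e
    have e2 : (Fintype.card {y : ZMod p // y ^ 2 = a} : ℤ)
        = quadraticChar (ZMod p) a + 1 := by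
      rw [show Fintype.card {y : ZMod p // y ^ 2 = a}
          = Fintype.card {x : ZMod p | x ^ 2 = a} from Fintype.card_congr (Equiv.refl _)]
      exact e
    have e3 : ((Fintype.card {y : ZMod p // y ^ 2 = a} : ℕ) : ZMod p)
        = ((quadraticChar (ZMod p) a : ℤ) : ZMod p) + 1 := by
      exact_mod_cast congrArg (fun z : ℤ => (z : ZMod p)) e2
    rw [e3, quadraticChar_eq_pow_of_char_ne_two' hchar, ZMod.card]
  rw [h1]
  push_cast
  rw [Finset.sum_congr rfl fun x (_ : x ∈ univ) => h2 ((x ^ 2 - 1) * (d * x ^ 2 - 1))]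
  rw [Finset.sum_add_distrib]
  simp [Finset.card_univ, ZMod.card]

theorem stmt8 (p : ℕ) [Fact p.Prime] (hp : p ≠ 2) (d : ZMod p)
    (hd0 : d ≠ 0) (hd1 : d ≠ 1) :
    (mCard p d : ZMod p) =
      (-1 : ZMod p) ^ ((p + 1) / 2) *
        (∑ j ∈ range ((p - 1) / 2 + 1),
          (((p - 1) / 2).choose j : ZMod p) ^ 2 * d ^ j)
      - ((legendreSym p (d.val : ℤ) : ℤ) : ZMod p) := by
  obtain ⟨t, ht⟩ := (Fact.out : p.Prime).odd_of_ne_two hp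
  have h2 := (Fact.out : p.Prime).two_le
  have h1 : (p - 1) / 2 = p / 2 := by omega
  have h3 : (p + 1) / 2 = p / 2 + 1 := by omega
  have h4 : (((legendreSym p (d.val : ℤ) : ℤ)) : ZMod p) = d ^ (p / 2) := by
    rw [legendreSym.eq_pow]
    congr 1
    push_cast
    simp [ZMod.natCast_val, ZMod.cast_id]
  rw [mCard_cast p hp d, expand_sum p hp d, h1, h3, h4]
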